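/- For every 1 ≤ r ≤ m and all indices 1 ≤ c₁ < ⋯ < c_r ≤ m and 1 ≤ d₁ < ⋯ < d_r ≤ m, the leading monomial of the minor [c₁,…,c_r | d₁,…,d_r]_{WᵀW} of WᵀW is lm([c₁,…,c_r | d₁,…,d_r]_{WᵀW}) = ∏_{j=1}^{r} W_{j, c_j} · W_{j, d_j}. -/

import Mathlib

open MvPolynomial Matrix

/-- The variables `W_{ij}` (a type synonym of `Fin m × Fin m`, carrying the variable order
`W₁₁ > W₂₁ > ⋯ > W_{m1} > W₁₂ > ⋯ > W_{mm}`, most significant variable smallest). -/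
def WVar (m : ℕ) : Type := Fin m × Fin m

/-- The variable `W_{ij}`. -/
def wv {m : ℕ} (i j : Fin m) : WVar m := (i, j)

/-- Rank of a variable in the significance list `W₁₁ > W₂₁ > ⋯ > W_{mm}`. -/
def wRank (m : ℕ) : WVar m → ℕ := fun v =>
  match v with
  | (i, j) => (i : ℕ) + (j : ℕ) * m

theorem wRank_injective (m : ℕ) : Function.Injective (wRank m) := by
  rintro ⟨i, j⟩ ⟨i', j'⟩ h
  simp only [wRank] at h
  have hm : 0 < m := i.pos
  have h1 : (i : ℕ) = (i' : ℕ) := by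
    have := congrArg (· % m) h
    simpa [Nat.add_mul_mod_self_right, Nat.mod_eq_of_lt i.isLt,
      Nat.mod_eq_of_lt i'.isLt] using this
  have h2 : (j : ℕ) = (j' : ℕ) := by
    rw [h1] at h
    exact Nat.eq_of_mul_eq_mul_right hm (Nat.add_left_cancel h)
  have : i = i' := Fin.ext h1
  have : j = j' := Fin.ext h2
  subst_vars
  rfl

/-- The variable order `W₁₁ > W₂₁ > ⋯ > W_{mm}` (most significant variable least). -/
instance (m : ℕ) : LinearOrder (WVar m) := LinearOrder.lift' (wRank m) (wRank_injective m)

/-- The degree lexicographic order on monomials: first compare total degrees, then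
compare lexicographically (a monomial is larger if it has larger exponent at the most
significant, i.e. least, variable where they differ). -/
def degLexLt {σ : Type*} [LinearOrder σ] (a b : σ →₀ ℕ) : Prop :=
  (a.sum fun _ e => e) < (b.sum fun _ e => e) ∨
    ((a.sum fun _ e => e) = (b.sum fun _ e => e) ∧ toLex a < toLex b)

/-- `d` is the leading monomial (exponent vector) of `f` for the degree lexicographic
order: it occurs in `f` and strictly dominates every other monomial of `f`. -/
def IsLeadingMonomial {σ : Type*} [LinearOrder σ] {K : Type*} [CommSemiring K]
    (f : MvPolynomial σ K) (d : σ →₀ ℕ) : Prop :=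
  d ∈ f.support ∧ ∀ d' ∈ f.support, d' ≠ d → degLexLt d' d

/-- The `m × m` matrix `W` of indeterminates. -/
noncomputable def WmatS (K : Type) [Field K] (m : ℕ) :
    Matrix (Fin m) (Fin m) (MvPolynomial (WVar m) K) :=
  fun i j => X (wv i j)

/-! ### Auxiliary order lemmas -/

lemma wvar_lt_iff {m : ℕ} {v w : WVar m} : v < w ↔ wRank m v < wRank m w := Iff.rfl

lemma wRank_wv {m : ℕ} (i t : Fin m) : wRank m (wv i t) = (i : ℕ) + (t : ℕ) * m := rfl

lemma wv_eq_iff {m : ℕ} {i j i' j' : Fin m} : wv i j = wv i' j' ↔ i = i' ∧ j = j' :=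
  Iff.of_eq (Prod.mk.injEq i j i' j')

lemma rank_le_rank {m : ℕ} {i0 t0 i t : Fin m} (h1 : (i0 : ℕ) ≤ (i : ℕ))
    (h2 : (t0 : ℕ) ≤ (t : ℕ)) : wRank m (wv i0 t0) ≤ wRank m (wv i t) := by
  have h3 : (t0 : ℕ) * m ≤ (t : ℕ) * m := Nat.mul_le_mul_right m h2
  rw [wRank_wv, wRank_wv]; omega

lemma rank_lt_row {m : ℕ} {i0 t0 i t : Fin m} (h1 : (i0 : ℕ) < (i : ℕ))
    (h2 : (t0 : ℕ) ≤ (t : ℕ)) : wRank m (wv i0 t0) < wRank m (wv i t) := by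
  have h3 : (t0 : ℕ) * m ≤ (t : ℕ) * m := Nat.mul_le_mul_right m h2
  rw [wRank_wv, wRank_wv]; omega

lemma rank_lt_col {m : ℕ} {i0 t0 i t : Fin m} (h2 : (t0 : ℕ) < (t : ℕ)) :
    wRank m (wv i0 t0) < wRank m (wv i t) := by
  have h1 : (i0 : ℕ) < m := i0.isLt
  have h3 : ((t0 : ℕ) + 1) * m ≤ (t : ℕ) * m := Nat.mul_le_mul_right m h2
  rw [add_mul, one_mul] at h3
  rw [wRank_wv, wRank_wv]; omega

/-! ### Tails of the candidate monomials -/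

/-- The part of a monomial `∏_j W_{row j, col j}` coming from indices `j ≥ p`. -/
noncomputable def tailF {m r : ℕ} (col row : Fin r → Fin m) (p : ℕ) : WVar m →₀ ℕ :=
  ∑ j ∈ Finset.univ.filter (fun j : Fin r => p ≤ (j : ℕ)),
    Finsupp.single (wv (row j) (col j)) 1

lemma tailF_apply {m r : ℕ} (col row : Fin r → Fin m) (p : ℕ) (w : WVar m) :
    tailF col row p w = ∑ j ∈ Finset.univ.filter (fun j : Fin r => p ≤ (j : ℕ)),
      if wv (row j) (col j) = w then 1 else 0 := by
  classical
  rw [tailF, Finsupp.finset_sum_apply]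
  exact Finset.sum_congr rfl fun j _ => Finsupp.single_apply

lemma tailF_apply_zero {m r : ℕ} {col row : Fin r → Fin m} {p : ℕ} {w : WVar m}
    (h : ∀ j : Fin r, p ≤ (j : ℕ) → wv (row j) (col j) ≠ w) : tailF col row p w = 0 := by
  classical
  rw [tailF_apply]
  apply Finset.sum_eq_zero
  intro j hj
  rw [Finset.mem_filter] at hj
  simp [h j hj.2]

lemma tailF_apply_ite {m r : ℕ} {col row : Fin r → Fin m} {p : ℕ} (hp : p < r)
    {i0 t0 : Fin m} (hcol : col ⟨p, hp⟩ = t0)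
    (h : ∀ j : Fin r, p ≤ (j : ℕ) → j ≠ ⟨p, hp⟩ → wv (row j) (col j) ≠ wv i0 t0) :
    tailF col row p (wv i0 t0) = if row ⟨p, hp⟩ = i0 then 1 else 0 := by
  classical
  rw [tailF_apply, Finset.sum_eq_single_of_mem ⟨p, hp⟩ (by simp)
    (fun j hj hne => by rw [Finset.mem_filter] at hj; simp [h j hj.2 hne])]
  by_cases hr : row ⟨p, hp⟩ = i0 <;> simp [hr, hcol, wv_eq_iff]

lemma tailF_succ {m r : ℕ} {col row : Fin r → Fin m} {p : ℕ} (hp : p < r) :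
    tailF col row p
      = Finsupp.single (wv (row ⟨p, hp⟩) (col ⟨p, hp⟩)) 1 + tailF col row (p + 1) := by
  classical
  have hins : Finset.univ.filter (fun j : Fin r => p ≤ (j : ℕ))
      = insert ⟨p, hp⟩ (Finset.univ.filter (fun j : Fin r => p + 1 ≤ (j : ℕ))) := by
    ext j
    simp only [Finset.mem_filter, Finset.mem_univ, true_and, Finset.mem_insert, Fin.ext_iff]
    omega
  rw [tailF, tailF, hins, Finset.sum_insert (by simp)]

lemma inj_lb {m r : ℕ} {a : Fin r → Fin m} (ha : Function.Injective a) {p : ℕ}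
    (h : ∀ j : Fin r, (j : ℕ) < p → (a j : ℕ) = j) :
    ∀ j : Fin r, p ≤ (j : ℕ) → p ≤ (a j : ℕ) := by
  intro j hj
  by_contra hlt
  push_neg at hlt
  have hs : (a j : ℕ) < r := lt_of_lt_of_le hlt (hj.trans j.isLt.le)
  have h2 := h ⟨(a j : ℕ), hs⟩ hlt
  have h3 : a ⟨(a j : ℕ), hs⟩ = a j := Fin.ext (by simpa using h2)
  have h4 := congrArg Fin.val (ha h3)
  simp at h4
  omega

/-- Producing a strict lex inequality from a witness variable `v` such that all the
variables occurring in either side have rank at least that of `v`. -/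
lemma win_lemma {m r : ℕ} {c d a b a' b' : Fin r → Fin m} {p q : ℕ} {v : WVar m}
    (h1 : ∀ j : Fin r, p ≤ (j : ℕ) → wRank m v ≤ wRank m (wv (a j) (c j)))
    (h2 : ∀ j : Fin r, q ≤ (j : ℕ) → wRank m v ≤ wRank m (wv (b j) (d j)))
    (h3 : ∀ j : Fin r, p ≤ (j : ℕ) → wRank m v ≤ wRank m (wv (a' j) (c j)))
    (h4 : ∀ j : Fin r, q ≤ (j : ℕ) → wRank m v ≤ wRank m (wv (b' j) (d j)))
    (hv : (tailF c a p + tailF d b q) v < (tailF c a' p + tailF d b' q) v) :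
    toLex (tailF c a p + tailF d b q) < toLex (tailF c a' p + tailF d b' q) := by
  refine Finsupp.Lex.lt_iff.mpr ⟨v, fun w hw => ?_, hv⟩
  have hwr : wRank m w < wRank m v := wvar_lt_iff.mp hw
  have hz : ∀ (colf rowf : Fin r → Fin m) (s : ℕ),
      (∀ j : Fin r, s ≤ (j : ℕ) → wRank m v ≤ wRank m (wv (rowf j) (colf j))) →
      tailF colf rowf s w = 0 := by
    intro colf rowf s hbd
    refine tailF_apply_zero fun j hj heq => ?_
    have := hbd j hj
    rw [heq] at this
    omega
  show (tailF c a p + tailF d b q) w = (tailF c a' p + tailF d b' q) w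
  rw [Finsupp.add_apply, Finsupp.add_apply, hz _ _ _ h1, hz _ _ _ h2, hz _ _ _ h3, hz _ _ _ h4]

/-- The "win" on the `c`-side: if the row used for column `c_p` is not the minimal
available row `p`, the whole monomial drops strictly below the reference monomial. -/
lemma cwin {m r : ℕ} (hrm : r ≤ m) {c d : Fin r → Fin m} (hc : StrictMono c)
    {a b : Fin r → Fin m} (ha : Function.Injective a)
    {p q : ℕ} (hp : p < r)
    (hap : ∀ j : Fin r, (j : ℕ) < p → (a j : ℕ) = j)
    (hane : (a ⟨p, hp⟩ : ℕ) ≠ p)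
    (hdb : ∀ j : Fin r, q ≤ (j : ℕ) →
      wRank m (wv (Fin.castLE hrm ⟨p, hp⟩) (c ⟨p, hp⟩)) < wRank m (wv (b j) (d j)))
    (hdc : ∀ j : Fin r, q ≤ (j : ℕ) →
      wRank m (wv (Fin.castLE hrm ⟨p, hp⟩) (c ⟨p, hp⟩)) < wRank m (wv (Fin.castLE hrm j) (d j))) :
    toLex (tailF c a p + tailF d b q)
      < toLex (tailF c (Fin.castLE hrm) p + tailF d (Fin.castLE hrm) q) := by
  have hal : ∀ j : Fin r, p ≤ (j : ℕ) → p ≤ (a j : ℕ) := inj_lb ha hap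
  have hccol : ∀ j : Fin r, p ≤ (j : ℕ) → (c ⟨p, hp⟩ : ℕ) ≤ (c j : ℕ) := by
    intro j hj
    exact (hc.monotone (show (⟨p, hp⟩ : Fin r) ≤ j from by rw [Fin.le_def]; exact hj)
      : c ⟨p, hp⟩ ≤ c j)
  have hccol' : ∀ j : Fin r, p ≤ (j : ℕ) → j ≠ ⟨p, hp⟩ → (c ⟨p, hp⟩ : ℕ) < (c j : ℕ) := by
    intro j hj hne
    exact hc (lt_of_le_of_ne (by rw [Fin.le_def]; exact hj) (Ne.symm hne)
      : (⟨p, hp⟩ : Fin r) < j)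
  have hz1 : tailF c a p (wv (Fin.castLE hrm ⟨p, hp⟩) (c ⟨p, hp⟩)) = 0 := by
    refine tailF_apply_zero fun j hj heq => ?_
    rcases wv_eq_iff.mp heq with ⟨hrow, hcol⟩
    by_cases hjj : j = ⟨p, hp⟩
    · subst hjj
      exact hane (by simpa using congrArg Fin.val hrow)
    · have h5 := congrArg Fin.val hcol
      have h6 := hccol' j hj hjj
      omega
  have hz2 : tailF d b q (wv (Fin.castLE hrm ⟨p, hp⟩) (c ⟨p, hp⟩)) = 0 := by
    refine tailF_apply_zero fun j hj heq => ?_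
    have := hdb j hj
    rw [heq] at this
    omega
  have hz3 : tailF d (Fin.castLE hrm) q (wv (Fin.castLE hrm ⟨p, hp⟩) (c ⟨p, hp⟩)) = 0 := by
    refine tailF_apply_zero fun j hj heq => ?_
    have := hdc j hj
    rw [heq] at this
    omega
  have ho1 : tailF c (Fin.castLE hrm) p (wv (Fin.castLE hrm ⟨p, hp⟩) (c ⟨p, hp⟩)) = 1 := by
    have huniq : ∀ j : Fin r, p ≤ (j : ℕ) → j ≠ ⟨p, hp⟩ →
        wv (Fin.castLE hrm j) (c j) ≠ wv (Fin.castLE hrm ⟨p, hp⟩) (c ⟨p, hp⟩) := by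
      intro j hj hne heq
      have h5 := congrArg Fin.val (wv_eq_iff.mp heq).2
      have h6 := hccol' j hj hne
      omega
    rw [tailF_apply_ite hp rfl huniq]
    exact if_pos rfl
  refine win_lemma (v := wv (Fin.castLE hrm ⟨p, hp⟩) (c ⟨p, hp⟩))
    (fun j hj => ?_) (fun j hj => le_of_lt (hdb j hj))
    (fun j hj => ?_) (fun j hj => le_of_lt (hdc j hj)) ?_
  · exact rank_le_rank (by simpa using hal j hj) (hccol j hj)
  · exact rank_le_rank (by simpa using hj) (hccol j hj)
  · rw [Finsupp.add_apply, Finsupp.add_apply, hz1, hz2, ho1, hz3]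
    norm_num

/-- The "double win" when `p = q` and the two current columns agree. -/
lemma dblwin {m r : ℕ} (hrm : r ≤ m) {c d : Fin r → Fin m} (hc : StrictMono c)
    (hd : StrictMono d) {a b : Fin r → Fin m}
    (ha : Function.Injective a) (hb : Function.Injective b)
    {p : ℕ} (hp : p < r)
    (hap : ∀ j : Fin r, (j : ℕ) < p → (a j : ℕ) = j)
    (hbp : ∀ j : Fin r, (j : ℕ) < p → (b j : ℕ) = j)
    (hcd : c ⟨p, hp⟩ = d ⟨p, hp⟩)
    (hne : ¬((a ⟨p, hp⟩ : ℕ) = p ∧ (b ⟨p, hp⟩ : ℕ) = p)) :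
    toLex (tailF c a p + tailF d b p)
      < toLex (tailF c (Fin.castLE hrm) p + tailF d (Fin.castLE hrm) p) := by
  have hal : ∀ j : Fin r, p ≤ (j : ℕ) → p ≤ (a j : ℕ) := inj_lb ha hap
  have hbl : ∀ j : Fin r, p ≤ (j : ℕ) → p ≤ (b j : ℕ) := inj_lb hb hbp
  have hccol : ∀ j : Fin r, p ≤ (j : ℕ) → (c ⟨p, hp⟩ : ℕ) ≤ (c j : ℕ) := fun j hj =>
    (hc.monotone (show (⟨p, hp⟩ : Fin r) ≤ j from by rw [Fin.le_def]; exact hj)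
      : c ⟨p, hp⟩ ≤ c j)
  have hdcol : ∀ j : Fin r, p ≤ (j : ℕ) → (c ⟨p, hp⟩ : ℕ) ≤ (d j : ℕ) := fun j hj => by
    rw [hcd]
    exact (hd.monotone (show (⟨p, hp⟩ : Fin r) ≤ j from by rw [Fin.le_def]; exact hj)
      : d ⟨p, hp⟩ ≤ d j)
  have hccol' : ∀ j : Fin r, p ≤ (j : ℕ) → j ≠ ⟨p, hp⟩ → (c ⟨p, hp⟩ : ℕ) < (c j : ℕ) :=
    fun j hj hne' =>
      hc (lt_of_le_of_ne (by rw [Fin.le_def]; exact hj) (Ne.symm hne')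
        : (⟨p, hp⟩ : Fin r) < j)
  have hdcol' : ∀ j : Fin r, p ≤ (j : ℕ) → j ≠ ⟨p, hp⟩ → (c ⟨p, hp⟩ : ℕ) < (d j : ℕ) := by
    intro j hj hne'
    rw [hcd]
    exact hd (lt_of_le_of_ne (by rw [Fin.le_def]; exact hj) (Ne.symm hne')
      : (⟨p, hp⟩ : Fin r) < j)
  have huc : ∀ (row : Fin r → Fin m) (j : Fin r), p ≤ (j : ℕ) → j ≠ ⟨p, hp⟩ →
      wv (row j) (c j) ≠ wv (Fin.castLE hrm ⟨p, hp⟩) (c ⟨p, hp⟩) := by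
    intro row j hj hne' heq
    have h5 := congrArg Fin.val (wv_eq_iff.mp heq).2
    have h6 := hccol' j hj hne'
    omega
  have hud : ∀ (row : Fin r → Fin m) (j : Fin r), p ≤ (j : ℕ) → j ≠ ⟨p, hp⟩ →
      wv (row j) (d j) ≠ wv (Fin.castLE hrm ⟨p, hp⟩) (c ⟨p, hp⟩) := by
    intro row j hj hne' heq
    have h5 := congrArg Fin.val (wv_eq_iff.mp heq).2
    have h6 := hdcol' j hj hne'
    omega
  have e1 : tailF c a p (wv (Fin.castLE hrm ⟨p, hp⟩) (c ⟨p, hp⟩))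
      = if a ⟨p, hp⟩ = Fin.castLE hrm ⟨p, hp⟩ then 1 else 0 :=
    tailF_apply_ite hp rfl (huc a)
  have e2 : tailF d b p (wv (Fin.castLE hrm ⟨p, hp⟩) (c ⟨p, hp⟩))
      = if b ⟨p, hp⟩ = Fin.castLE hrm ⟨p, hp⟩ then 1 else 0 :=
    tailF_apply_ite hp hcd.symm (hud b)
  have e3 : tailF c (Fin.castLE hrm) p (wv (Fin.castLE hrm ⟨p, hp⟩) (c ⟨p, hp⟩)) = 1 := by
    rw [tailF_apply_ite hp rfl (huc (Fin.castLE hrm))]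
    exact if_pos rfl
  have e4 : tailF d (Fin.castLE hrm) p (wv (Fin.castLE hrm ⟨p, hp⟩) (c ⟨p, hp⟩)) = 1 := by
    rw [tailF_apply_ite hp hcd.symm (hud (Fin.castLE hrm))]
    exact if_pos rfl
  have hnot : ¬(a ⟨p, hp⟩ = Fin.castLE hrm ⟨p, hp⟩ ∧ b ⟨p, hp⟩ = Fin.castLE hrm ⟨p, hp⟩) := by
    rintro ⟨h1', h2'⟩
    exact hne ⟨by simpa using congrArg Fin.val h1', by simpa using congrArg Fin.val h2'⟩
  refine win_lemma (v := wv (Fin.castLE hrm ⟨p, hp⟩) (c ⟨p, hp⟩))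
    (fun j hj => rank_le_rank (by simpa using hal j hj) (hccol j hj))
    (fun j hj => rank_le_rank (by simpa using hbl j hj) (hdcol j hj))
    (fun j hj => rank_le_rank (by simpa using hj) (hccol j hj))
    (fun j hj => rank_le_rank (by simpa using hj) (hdcol j hj)) ?_
  rw [Finsupp.add_apply, Finsupp.add_apply, e1, e2, e3, e4]
  by_cases h1' : a ⟨p, hp⟩ = Fin.castLE hrm ⟨p, hp⟩
  · by_cases h2' : b ⟨p, hp⟩ = Fin.castLE hrm ⟨p, hp⟩
    · exact absurd ⟨h1', h2'⟩ hnot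
    · rw [if_pos h1', if_neg h2']
      omega
  · by_cases h2' : b ⟨p, hp⟩ = Fin.castLE hrm ⟨p, hp⟩
    · rw [if_neg h1', if_pos h2']
      omega
    · rw [if_neg h1', if_neg h2']
      omega

/-- Adding a common part on the left preserves strict lex inequality. -/
lemma toLex_add_lt_add_left {m : ℕ} {x y : WVar m →₀ ℕ} (h : toLex x < toLex y)
    (E : WVar m →₀ ℕ) : toLex (E + x) < toLex (E + y) := by
  rw [toLex_add, toLex_add]
  exact add_lt_add_right h _

/-- Peeling the `c`-side when the current row matches the reference row. -/
lemma peelC {m r : ℕ} (hrm : r ≤ m) {c d a b : Fin r → Fin m} {p q : ℕ} (hp : p < r)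
    (hap0 : (a ⟨p, hp⟩ : ℕ) = p)
    (h : toLex (tailF c a (p + 1) + tailF d b q)
        < toLex (tailF c (Fin.castLE hrm) (p + 1) + tailF d (Fin.castLE hrm) q)
      ∨ ((∀ j : Fin r, p + 1 ≤ (j : ℕ) → a j = Fin.castLE hrm j)
          ∧ (∀ j : Fin r, q ≤ (j : ℕ) → b j = Fin.castLE hrm j))) :
    toLex (tailF c a p + tailF d b q)
        < toLex (tailF c (Fin.castLE hrm) p + tailF d (Fin.castLE hrm) q)
      ∨ ((∀ j : Fin r, p ≤ (j : ℕ) → a j = Fin.castLE hrm j)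
          ∧ (∀ j : Fin r, q ≤ (j : ℕ) → b j = Fin.castLE hrm j)) := by
  have hsd : a ⟨p, hp⟩ = Fin.castLE hrm ⟨p, hp⟩ := Fin.ext (by simpa using hap0)
  rcases h with hlt | ⟨h1, h2⟩
  · left
    rw [tailF_succ (col := c) (row := a) hp, tailF_succ (col := c) (row := Fin.castLE hrm) hp,
      hsd, add_assoc, add_assoc]
    exact toLex_add_lt_add_left hlt _
  · right
    refine ⟨fun j hj => ?_, h2⟩
    rcases Nat.eq_or_lt_of_le hj with heq | hlt'
    · have hje : j = ⟨p, hp⟩ := Fin.ext heq.symm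
      rw [hje, hsd]
    · exact h1 j hlt'

set_option maxHeartbeats 1000000 in
/-- The core combinatorial induction: comparing the tails of an arbitrary admissible
monomial with the candidate leading monomial. -/
lemma core {m r : ℕ} (hrm : r ≤ m) (c d : Fin r → Fin m) (hc : StrictMono c)
    (hd : StrictMono d) (n : ℕ) :
    ∀ (p q : ℕ) (a b : Fin r → Fin m), Function.Injective a → Function.Injective b →
    p ≤ r → q ≤ r → r - p + (r - q) ≤ n →
    (∀ j : Fin r, (j : ℕ) < p → (a j : ℕ) = j) →
    (∀ j : Fin r, (j : ℕ) < q → (b j : ℕ) = j) →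
    toLex (tailF c a p + tailF d b q)
        < toLex (tailF c (Fin.castLE hrm) p + tailF d (Fin.castLE hrm) q)
      ∨ ((∀ j : Fin r, p ≤ (j : ℕ) → a j = Fin.castLE hrm j)
          ∧ (∀ j : Fin r, q ≤ (j : ℕ) → b j = Fin.castLE hrm j)) := by
  induction n with
  | zero =>
    intro p q a b ha hb hp hq hn hap hbq
    right
    exact ⟨fun j hj => absurd hj (by have := j.isLt; omega),
      fun j hj => absurd hj (by have := j.isLt; omega)⟩
  | succ n IH =>
    intro p q a b ha hb hp hq hn hap hbq
    have hal := inj_lb ha hap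
    have hbl := inj_lb hb hbq
    -- the d-side peel, as a reusable fact
    have dpeel : ∀ (hqr : q < r), (b ⟨q, hqr⟩ : ℕ) = q → r - p + (r - (q + 1)) ≤ n →
        toLex (tailF c a p + tailF d b q)
            < toLex (tailF c (Fin.castLE hrm) p + tailF d (Fin.castLE hrm) q)
          ∨ ((∀ j : Fin r, p ≤ (j : ℕ) → a j = Fin.castLE hrm j)
              ∧ (∀ j : Fin r, q ≤ (j : ℕ) → b j = Fin.castLE hrm j)) := by
      intro hqr hbq0 hcnt
      have hrec0 := IH p (q + 1) a b ha hb hp hqr hcnt hap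
        (fun j (hj : (j : ℕ) < q + 1) => by
          rcases Nat.lt_or_ge (j : ℕ) q with h' | h'
          · exact hbq j h'
          · have hjq : (j : ℕ) = q := by omega
            have hje : j = ⟨q, hqr⟩ := Fin.ext hjq
            rw [hje]; exact hbq0)
      have hrec : toLex (tailF d b (q + 1) + tailF c a p)
          < toLex (tailF d (Fin.castLE hrm) (q + 1) + tailF c (Fin.castLE hrm) p)
          ∨ ((∀ j : Fin r, q + 1 ≤ (j : ℕ) → b j = Fin.castLE hrm j)
            ∧ (∀ j : Fin r, p ≤ (j : ℕ) → a j = Fin.castLE hrm j)) := by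
        rcases hrec0 with h | ⟨h1, h2⟩
        · left
          rw [add_comm (tailF d b (q + 1)), add_comm (tailF d (Fin.castLE hrm) (q + 1))]
          exact h
        · exact Or.inr ⟨h2, h1⟩
      have := peelC (c := d) (d := c) (a := b) (b := a) hrm hqr hbq0 hrec
      rcases this with hlt | ⟨h1, h2⟩
      · left
        rw [add_comm (tailF c a p), add_comm (tailF c (Fin.castLE hrm) p)]
        exact hlt
      · exact Or.inr ⟨h2, h1⟩
    -- the c-side peel, as a reusable fact
    have cpeel : ∀ (hpr : p < r), (a ⟨p, hpr⟩ : ℕ) = p → r - (p + 1) + (r - q) ≤ n →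
        toLex (tailF c a p + tailF d b q)
            < toLex (tailF c (Fin.castLE hrm) p + tailF d (Fin.castLE hrm) q)
          ∨ ((∀ j : Fin r, p ≤ (j : ℕ) → a j = Fin.castLE hrm j)
              ∧ (∀ j : Fin r, q ≤ (j : ℕ) → b j = Fin.castLE hrm j)) := by
      intro hpr hap0 hcnt
      exact peelC hrm hpr hap0 (IH (p + 1) q a b ha hb hpr hq hcnt
        (fun j (hj : (j : ℕ) < p + 1) => by
          rcases Nat.lt_or_ge (j : ℕ) p with h' | h'
          · exact hap j h'
          · have hjp : (j : ℕ) = p := by omega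
            have hje : j = ⟨p, hpr⟩ := Fin.ext hjp
            rw [hje]; exact hap0)
        hbq)
    by_cases hpr : p < r
    case neg =>
      -- p = r : only the d-side remains
      by_cases hqr : q < r
      case neg =>
        right
        exact ⟨fun j hj => absurd hj (by have := j.isLt; omega),
          fun j hj => absurd hj (by have := j.isLt; omega)⟩
      case pos =>
        by_cases hbq0 : (b ⟨q, hqr⟩ : ℕ) = q
        case pos => exact dpeel hqr hbq0 (by omega)
        case neg =>
          left
          have hw := cwin (c := d) (d := c) (a := b) (b := a) hrm hd hb hqr hbq hbq0
            (fun j (hj : p ≤ (j : ℕ)) =>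
              absurd (j.isLt.trans_le (le_of_not_gt hpr)) (by omega))
            (fun j (hj : p ≤ (j : ℕ)) =>
              absurd (j.isLt.trans_le (le_of_not_gt hpr)) (by omega))
          rw [add_comm (tailF c a p), add_comm (tailF c (Fin.castLE hrm) p)]
          exact hw
    case pos =>
      by_cases hqr : q < r
      case neg =>
        -- q = r : only the c-side remains
        by_cases hap0 : (a ⟨p, hpr⟩ : ℕ) = p
        case pos => exact cpeel hpr hap0 (by omega)
        case neg =>
          left
          exact cwin hrm hc ha hpr hap hap0
            (fun j (hj : q ≤ (j : ℕ)) =>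
              absurd (j.isLt.trans_le (le_of_not_gt hqr)) (by omega))
            (fun j (hj : q ≤ (j : ℕ)) =>
              absurd (j.isLt.trans_le (le_of_not_gt hqr)) (by omega))
      case pos =>
        have hdcol : ∀ j : Fin r, q ≤ (j : ℕ) → (d ⟨q, hqr⟩ : ℕ) ≤ (d j : ℕ) := fun j hj =>
          (hd.monotone (show (⟨q, hqr⟩ : Fin r) ≤ j from by rw [Fin.le_def]; exact hj)
            : d ⟨q, hqr⟩ ≤ d j)
        have hccol : ∀ j : Fin r, p ≤ (j : ℕ) → (c ⟨p, hpr⟩ : ℕ) ≤ (c j : ℕ) := fun j hj =>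
          (hc.monotone (show (⟨p, hpr⟩ : Fin r) ≤ j from by rw [Fin.le_def]; exact hj)
            : c ⟨p, hpr⟩ ≤ c j)
        rcases lt_trichotomy ((c ⟨p, hpr⟩ : ℕ)) ((d ⟨q, hqr⟩ : ℕ)) with hcol | hcol | hcol
        · -- strictly smaller c-column: c-side action
          by_cases hap0 : (a ⟨p, hpr⟩ : ℕ) = p
          case pos => exact cpeel hpr hap0 (by omega)
          case neg =>
            left
            exact cwin hrm hc ha hpr hap hap0
              (fun j hj => rank_lt_col (lt_of_lt_of_le hcol (hdcol j hj)))
              (fun j hj => rank_lt_col (lt_of_lt_of_le hcol (hdcol j hj)))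
        · -- equal columns
          rcases lt_trichotomy p q with hpq | hpq | hpq
          · -- p < q : c-side action, all d-side rows exceed p
            by_cases hap0 : (a ⟨p, hpr⟩ : ℕ) = p
            case pos => exact cpeel hpr hap0 (by omega)
            case neg =>
              left
              refine cwin hrm hc ha hpr hap hap0 (fun j hj => ?_) (fun j hj => ?_)
              · refine rank_lt_row (by simpa using lt_of_lt_of_le hpq (hbl j hj)) ?_
                have := hdcol j hj
                omega
              · refine rank_lt_row (by simpa using lt_of_lt_of_le hpq hj) ?_
                have := hdcol j hj
                omega
          · -- p = q, equal columns
            subst hpq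
            have hcd : c ⟨p, hpr⟩ = d ⟨p, hqr⟩ := Fin.ext hcol
            by_cases hboth : (a ⟨p, hpr⟩ : ℕ) = p ∧ (b ⟨p, hpr⟩ : ℕ) = p
            case pos =>
              have hrec := IH (p + 1) (p + 1) a b ha hb hpr hqr (by omega)
                (fun j (hj : (j : ℕ) < p + 1) => by
                  rcases Nat.lt_or_ge (j : ℕ) p with h' | h'
                  · exact hap j h'
                  · have hjp : (j : ℕ) = p := by omega
                    have hje : j = ⟨p, hpr⟩ := Fin.ext hjp
                    rw [hje]; exact hboth.1)
                (fun j (hj : (j : ℕ) < p + 1) => by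
                  rcases Nat.lt_or_ge (j : ℕ) p with h' | h'
                  · exact hbq j h'
                  · have hjp : (j : ℕ) = p := by omega
                    have hje : j = ⟨p, hpr⟩ := Fin.ext hjp
                    rw [hje]; exact hboth.2)
              have hsa : a ⟨p, hpr⟩ = Fin.castLE hrm ⟨p, hpr⟩ := Fin.ext (by simpa using hboth.1)
              have hsb : b ⟨p, hpr⟩ = Fin.castLE hrm ⟨p, hpr⟩ := Fin.ext (by simpa using hboth.2)
              rcases hrec with hlt | ⟨h1, h2⟩
              · left
                have hreL : tailF c a p + tailF d b p
                    = (Finsupp.single (wv (Fin.castLE hrm ⟨p, hpr⟩) (c ⟨p, hpr⟩)) 1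
                        + Finsupp.single (wv (Fin.castLE hrm ⟨p, hpr⟩) (d ⟨p, hpr⟩)) 1)
                      + (tailF c a (p + 1) + tailF d b (p + 1)) := by
                  rw [tailF_succ (col := c) (row := a) hpr,
                    tailF_succ (col := d) (row := b) hpr, hsa, hsb, add_add_add_comm]
                have hreR : tailF c (Fin.castLE hrm) p + tailF d (Fin.castLE hrm) p
                    = (Finsupp.single (wv (Fin.castLE hrm ⟨p, hpr⟩) (c ⟨p, hpr⟩)) 1
                        + Finsupp.single (wv (Fin.castLE hrm ⟨p, hpr⟩) (d ⟨p, hpr⟩)) 1)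
                      + (tailF c (Fin.castLE hrm) (p + 1) + tailF d (Fin.castLE hrm) (p + 1)) := by
                  rw [tailF_succ (col := c) (row := Fin.castLE hrm) hpr,
                    tailF_succ (col := d) (row := Fin.castLE hrm) hpr, add_add_add_comm]
                rw [hreL, hreR]
                exact toLex_add_lt_add_left hlt _
              · right
                constructor
                · intro j hj
                  rcases Nat.eq_or_lt_of_le hj with heq | hlt'
                  · have hje : j = ⟨p, hpr⟩ := Fin.ext heq.symm
                    rw [hje, hsa]
                  · exact h1 j hlt'
                · intro j hj
                  rcases Nat.eq_or_lt_of_le hj with heq | hlt'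
                  · have hje : j = ⟨p, hpr⟩ := Fin.ext heq.symm
                    rw [hje, hsb]
                  · exact h2 j hlt'
            case neg =>
              left
              exact dblwin hrm hc hd ha hb hpr hap hbq hcd hboth
          · -- q < p : d-side action, all c-side rows exceed q
            by_cases hbq0 : (b ⟨q, hqr⟩ : ℕ) = q
            case pos => exact dpeel hqr hbq0 (by omega)
            case neg =>
              left
              have hw := cwin (c := d) (d := c) (a := b) (b := a) hrm hd hb hqr hbq hbq0
                (fun j (hj : p ≤ (j : ℕ)) => by
                  refine rank_lt_row (by simpa using lt_of_lt_of_le hpq (hal j hj)) ?_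
                  have := hccol j hj
                  omega)
                (fun j (hj : p ≤ (j : ℕ)) => by
                  refine rank_lt_row (by simpa using lt_of_lt_of_le hpq hj) ?_
                  have := hccol j hj
                  omega)
              rw [add_comm (tailF c a p), add_comm (tailF c (Fin.castLE hrm) p)]
              exact hw
        · -- strictly smaller d-column: d-side action
          by_cases hbq0 : (b ⟨q, hqr⟩ : ℕ) = q
          case pos => exact dpeel hqr hbq0 (by omega)
          case neg =>
            left
            have hw := cwin (c := d) (d := c) (a := b) (b := a) hrm hd hb hqr hbq hbq0
              (fun j hj => rank_lt_col (lt_of_lt_of_le hcol (hccol j hj)))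
              (fun j hj => rank_lt_col (lt_of_lt_of_le hcol (hccol j hj)))
            rw [add_comm (tailF c a p), add_comm (tailF c (Fin.castLE hrm) p)]
            exact hw

/-! ### The candidate monomials -/

/-- The exponent vector `∑_j e_{(a j, c j)} + e_{(b j, d j)}`. -/
noncomputable def nuF {m r : ℕ} (c d a b : Fin r → Fin m) : WVar m →₀ ℕ :=
  ∑ j : Fin r, (Finsupp.single (wv (a j) (c j)) 1 + Finsupp.single (wv (b j) (d j)) 1)

lemma nuF_eq_tail {m r : ℕ} (c d a b : Fin r → Fin m) :
    nuF c d a b = tailF c a 0 + tailF d b 0 := by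
  rw [nuF, tailF, tailF, Finset.filter_true_of_mem (fun j _ => Nat.zero_le _),
    ← Finset.sum_add_distrib]

lemma key {m r : ℕ} (hrm : r ≤ m) (c d : Fin r → Fin m) (hc : StrictMono c)
    (hd : StrictMono d) (a b : Fin r → Fin m)
    (ha : Function.Injective a) (hb : Function.Injective b) :
    toLex (nuF c d a b) < toLex (nuF c d (Fin.castLE hrm) (Fin.castLE hrm))
      ∨ (a = Fin.castLE hrm ∧ b = Fin.castLE hrm) := by
  rcases core hrm c d hc hd (r + r) 0 0 a b ha hb (Nat.zero_le _) (Nat.zero_le _) (by omega)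
    (fun j hj => absurd hj (by omega)) (fun j hj => absurd hj (by omega)) with h | ⟨h1, h2⟩
  · left
    rw [nuF_eq_tail, nuF_eq_tail]
    exact h
  · right
    exact ⟨funext fun j => h1 j (Nat.zero_le _), funext fun j => h2 j (Nat.zero_le _)⟩

/-- The total degree of the candidate monomials. -/
noncomputable def degHom (α : Type*) : (α →₀ ℕ) →+ ℕ where
  toFun x := x.sum fun _ e => e
  map_zero' := Finsupp.sum_zero_index
  map_add' x y := Finsupp.sum_add_index' (h := fun _ e => e) (fun _ => rfl) (fun _ _ _ => rfl)

lemma nuF_deg {m r : ℕ} (c d a b : Fin r → Fin m) :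
    ((nuF c d a b).sum fun _ e => e) = 2 * r := by
  have : ((nuF c d a b).sum fun _ e => e) = degHom (WVar m) (nuF c d a b) := rfl
  rw [this, nuF, map_sum]
  have : ∀ j : Fin r, degHom (WVar m)
      (Finsupp.single (wv (a j) (c j)) 1 + Finsupp.single (wv (b j) (d j)) 1) = 2 := by
    intro j
    rw [map_add]
    show (Finsupp.single (wv (a j) (c j)) 1).sum (fun _ e => e)
      + (Finsupp.single (wv (b j) (d j)) 1).sum (fun _ e => e) = 2
    rw [Finsupp.sum_single_index rfl, Finsupp.sum_single_index rfl]
  rw [Finset.sum_congr rfl fun j _ => this j]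
  simp [mul_comm]

/-! ### Expansion of the minor -/

lemma prod_X_eq_monomial {K : Type} [Field K] {m : ℕ} {ι : Type*} (s : Finset ι)
    (v : ι → WVar m) :
    (∏ i ∈ s, (X (v i) : MvPolynomial (WVar m) K))
      = monomial (∑ i ∈ s, Finsupp.single (v i) 1) 1 := by
  classical
  induction s using Finset.cons_induction with
  | empty => simp
  | cons a s hans ih =>
    rw [Finset.prod_cons, Finset.sum_cons, ih, X, monomial_mul, one_mul]

lemma det_expand (K : Type) [Field K] {m r : ℕ} (hrm : r ≤ m) (c d : Fin r → Fin m) :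
    (Matrix.of fun i j : Fin r => ((WmatS K m)ᵀ * WmatS K m) (c i) (d j)).det
    = ∑ κ ∈ Finset.univ.filter (fun κ : Fin r → Fin m => Function.Injective κ),
        ∑ σ : Equiv.Perm (Fin r),
          Equiv.Perm.sign σ • (monomial (nuF c d (fun j => κ (σ⁻¹ j)) κ) (1 : K)) := by
  classical
  have hterm : ∀ (σ : Equiv.Perm (Fin r)) (κ : Fin r → Fin m),
      ((∏ i, (X (wv (κ i) (c (σ i))) : MvPolynomial (WVar m) K))
        * ∏ i, (X (wv (κ i) (d i)) : MvPolynomial (WVar m) K))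
      = monomial (nuF c d (fun j => κ (σ⁻¹ j)) κ) (1 : K) := by
    intro σ κ
    rw [prod_X_eq_monomial, prod_X_eq_monomial, monomial_mul, one_mul]
    congr 1
    rw [nuF, Finset.sum_add_distrib,
      ← Equiv.sum_comp σ (fun j => Finsupp.single (wv (κ (σ⁻¹ j)) (c j)) (1 : ℕ))]
    simp
  have hexp : (Matrix.of fun i j : Fin r => ((WmatS K m)ᵀ * WmatS K m) (c i) (d j)).det
      = ∑ κ : Fin r → Fin m, ∑ σ : Equiv.Perm (Fin r),
          Equiv.Perm.sign σ • ((∏ i, (X (wv (κ i) (c (σ i))) : MvPolynomial (WVar m) K))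
            * ∏ i, (X (wv (κ i) (d i)) : MvPolynomial (WVar m) K)) := by
    rw [Matrix.det_apply]
    have h1 : ∀ σ : Equiv.Perm (Fin r),
        (∏ i, (Matrix.of fun i j : Fin r => ((WmatS K m)ᵀ * WmatS K m) (c i) (d j)) (σ i) i)
        = ∑ κ : Fin r → Fin m,
            ((∏ i, (X (wv (κ i) (c (σ i))) : MvPolynomial (WVar m) K))
              * ∏ i, (X (wv (κ i) (d i)) : MvPolynomial (WVar m) K)) := by
      intro σ
      have h2 : ∀ i : Fin r,
          (Matrix.of fun i j : Fin r => ((WmatS K m)ᵀ * WmatS K m) (c i) (d j)) (σ i) i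
          = ∑ k : Fin m, (X (wv k (c (σ i))) : MvPolynomial (WVar m) K) * X (wv k (d i)) := by
        intro i
        simp [Matrix.mul_apply, WmatS, Matrix.transpose_apply]
      rw [Finset.prod_congr rfl fun i _ => h2 i, Finset.prod_univ_sum]
      rw [Fintype.piFinset_univ]
      exact Finset.sum_congr rfl fun κ _ => Finset.prod_mul_distrib
    calc (∑ σ : Equiv.Perm (Fin r), Equiv.Perm.sign σ •
            ∏ i, (Matrix.of fun i j : Fin r => ((WmatS K m)ᵀ * WmatS K m) (c i) (d j)) (σ i) i)
        = ∑ σ : Equiv.Perm (Fin r), ∑ κ : Fin r → Fin m,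
            Equiv.Perm.sign σ • ((∏ i, (X (wv (κ i) (c (σ i))) : MvPolynomial (WVar m) K))
              * ∏ i, (X (wv (κ i) (d i)) : MvPolynomial (WVar m) K)) := by
          refine Finset.sum_congr rfl fun σ _ => ?_
          rw [h1 σ, Finset.smul_sum]
      _ = _ := Finset.sum_comm
  rw [hexp, Finset.sum_filter_of_ne
    (p := fun κ : Fin r → Fin m => Function.Injective κ) ?_]
  · exact Finset.sum_congr rfl fun κ _ => Finset.sum_congr rfl fun σ _ => by rw [hterm σ κ]
  · intro κ _ hne
    by_contra hni
    apply hne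
    have hz : ∑ σ : Equiv.Perm (Fin r),
        Equiv.Perm.sign σ • ((∏ i, (X (wv (κ i) (c (σ i))) : MvPolynomial (WVar m) K))
          * ∏ i, (X (wv (κ i) (d i)) : MvPolynomial (WVar m) K)) = 0 := by
      have hrw : ∀ σ : Equiv.Perm (Fin r),
          Equiv.Perm.sign σ • ((∏ i, (X (wv (κ i) (c (σ i))) : MvPolynomial (WVar m) K))
              * ∏ i, (X (wv (κ i) (d i)) : MvPolynomial (WVar m) K))
          = (Equiv.Perm.sign σ •
              ∏ i, (Matrix.of fun i' j' : Fin r =>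
                (X (wv (κ j') (c i')) : MvPolynomial (WVar m) K)) (σ i) i)
            * ∏ i, (X (wv (κ i) (d i)) : MvPolynomial (WVar m) K) := by
        intro σ
        rw [smul_mul_assoc]
        rfl
      rw [Finset.sum_congr rfl fun σ _ => hrw σ, ← Finset.sum_mul, ← Matrix.det_apply]
      obtain ⟨i1, i2, heq, hne12⟩ := Function.not_injective_iff.mp hni
      rw [Matrix.det_zero_of_column_eq hne12 (fun k => by simp [heq]), zero_mul]
    calc ∑ σ : Equiv.Perm (Fin r),
          Equiv.Perm.sign σ • (monomial (nuF c d (fun j => κ (σ⁻¹ j)) κ) (1 : K))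
        = ∑ σ : Equiv.Perm (Fin r),
            Equiv.Perm.sign σ • ((∏ i, (X (wv (κ i) (c (σ i))) : MvPolynomial (WVar m) K))
              * ∏ i, (X (wv (κ i) (d i)) : MvPolynomial (WVar m) K)) :=
          Finset.sum_congr rfl fun σ _ => by rw [hterm σ κ]
      _ = 0 := hz

/-! ### Main theorem -/

/-- The leading monomial of the minor `[c₁,…,c_r | d₁,…,d_r]_{WᵀW}` for the degree
lexicographic order with `W₁₁ > W₂₁ > ⋯ > W_{m1} > W₁₂ > ⋯ > W_{mm}` is
`∏_{j=1}^r W_{j,c_j} W_{j,d_j}`. -/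
theorem stmt_8 (K : Type) [Field K] (m : ℕ) (hm : 1 ≤ m)
    (r : ℕ) (hr : 1 ≤ r) (hrm : r ≤ m) (c d : Fin r → Fin m)
    (hc : StrictMono c) (hd : StrictMono d) :
    IsLeadingMonomial
      ((Matrix.of fun i j : Fin r => ((WmatS K m)ᵀ * WmatS K m) (c i) (d j)).det)
      (∑ j : Fin r, (Finsupp.single (wv (Fin.castLE hrm j) (c j)) 1 +
        Finsupp.single (wv (Fin.castLE hrm j) (d j)) 1)) := by
  classical
  have htarget : (∑ j : Fin r, (Finsupp.single (wv (Fin.castLE hrm j) (c j)) 1 +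
      Finsupp.single (wv (Fin.castLE hrm j) (d j)) 1))
      = nuF c d (Fin.castLE hrm) (Fin.castLE hrm) := rfl
  rw [htarget, det_expand K hrm c d]
  have hcastinj : Function.Injective (Fin.castLE hrm : Fin r → Fin m) :=
    Fin.castLE_injective hrm
  -- coefficient of the candidate monomial is 1
  have hcoeff : MvPolynomial.coeff (nuF c d (Fin.castLE hrm) (Fin.castLE hrm))
      (∑ κ ∈ Finset.univ.filter (fun κ : Fin r → Fin m => Function.Injective κ),
        ∑ σ : Equiv.Perm (Fin r),
          Equiv.Perm.sign σ • (monomial (nuF c d (fun j => κ (σ⁻¹ j)) κ) (1 : K))) = 1 := by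
    rw [MvPolynomial.coeff_sum,
      Finset.sum_eq_single_of_mem (Fin.castLE hrm)
        (by simp [Finset.mem_filter, hcastinj]) ?hother]
    case hother =>
      intro κ hκ hneκ
      rw [Finset.mem_filter] at hκ
      rw [MvPolynomial.coeff_sum]
      apply Finset.sum_eq_zero
      intro σ _
      rw [MvPolynomial.coeff_smul, MvPolynomial.coeff_monomial, if_neg, smul_zero]
      intro heq
      rcases key hrm c d hc hd (fun j => κ (σ⁻¹ j)) κ
        (hκ.2.comp (σ⁻¹ : Equiv.Perm (Fin r)).injective) hκ.2 with hlt | ⟨_, h2⟩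
      · rw [heq] at hlt
        exact absurd hlt (lt_irrefl _)
      · exact hneκ h2
    · rw [MvPolynomial.coeff_sum,
        Finset.sum_eq_single_of_mem (1 : Equiv.Perm (Fin r)) (Finset.mem_univ _) ?hone]
      case hone =>
        intro σ _ hσ
        rw [MvPolynomial.coeff_smul, MvPolynomial.coeff_monomial, if_neg, smul_zero]
        intro heq
        rcases key hrm c d hc hd (fun j => Fin.castLE hrm (σ⁻¹ j)) (Fin.castLE hrm)
          (hcastinj.comp (σ⁻¹ : Equiv.Perm (Fin r)).injective) hcastinj
          with hlt | ⟨h1, _⟩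
        · rw [heq] at hlt
          exact absurd hlt (lt_irrefl _)
        · apply hσ
          have h' : σ⁻¹ = 1 := Equiv.ext fun j => hcastinj (congrFun h1 j)
          rw [← inv_inv σ, h', inv_one]
      · have hid : nuF c d (fun j => Fin.castLE hrm ((1 : Equiv.Perm (Fin r))⁻¹ j))
            (Fin.castLE hrm) = nuF c d (Fin.castLE hrm) (Fin.castLE hrm) := by
          congr 1
        rw [MvPolynomial.coeff_smul, MvPolynomial.coeff_monomial, if_pos hid]
        simp
  constructor
  · rw [MvPolynomial.mem_support_iff, hcoeff]
    exact one_ne_zero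
  · intro d' hd' hne
    -- identify d' as one of the admissible monomials
    have hmem := MvPolynomial.support_sum hd'
    rw [Finset.mem_biUnion] at hmem
    obtain ⟨κ, hκ, hmem2⟩ := hmem
    rw [Finset.mem_filter] at hκ
    have hmem3 := MvPolynomial.support_sum hmem2
    rw [Finset.mem_biUnion] at hmem3
    obtain ⟨σ, _, hmem4⟩ := hmem3
    have hmem5 := MvPolynomial.support_smul hmem4
    have hd'eq : d' = nuF c d (fun j => κ (σ⁻¹ j)) κ := by
      have := MvPolynomial.support_monomial_subset hmem5
      simpa using this
    right
    constructor
    · rw [hd'eq, nuF_deg, nuF_deg]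
    · rcases key hrm c d hc hd (fun j => κ (σ⁻¹ j)) κ
        (hκ.2.comp (σ⁻¹ : Equiv.Perm (Fin r)).injective) hκ.2 with hlt | ⟨h1, h2⟩
      · rw [hd'eq]
        exact hlt
      · exfalso
        apply hne
        rw [hd'eq]
        rw [show (fun j => κ (σ⁻¹ j)) = Fin.castLE hrm from h1, h2]
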